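/- Let c : ℤ → ℂ be a finitely supported sequence with ĉ(0) = 1, where ĉ(ξ) := ∑_{k∈ℤ} c(k)e^{-ikξ}. Then the infinite product φ̂(ξ) := ∏_{j=1}^∞ ĉ(2^{-j}ξ) converges locally uniformly on ℂ to an entire function satisfying φ̂(0) = 1 and the functional equation φ̂(2ξ) = ĉ(ξ) φ̂(ξ) for all ξ. -/

import Mathlib

open Complex

/-- Symbol (Fourier series) of a scalar sequence. -/
noncomputable def symb (u : ℤ → ℂ) (ξ : ℂ) : ℂ :=
  ∑ᶠ k : ℤ, u k * Complex.exp (-Complex.I * k * ξ)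

open Filter Metric Finset in
/-- Auxiliary general lemma: for any entire `g` with `g 0 = 1`, the products
`∏_{j<n} g(ξ/2^{j+1})` converge locally uniformly to an entire limit satisfying
the functional equation. -/
theorem aux_prod (g : ℂ → ℂ) (hdiff : Differentiable ℂ g) (hg0 : g 0 = 1) :
    ∃ φ : ℂ → ℂ,
      (∀ z : ℂ, AnalyticAt ℂ φ z) ∧ φ 0 = 1 ∧
      (∀ ξ : ℂ, φ (2 * ξ) = g ξ * φ ξ) ∧
      TendstoLocallyUniformly
        (fun n : ℕ => fun ξ : ℂ => ∏ j ∈ Finset.range n, g (ξ / 2 ^ (j + 1)))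
        φ Filter.atTop := by
  classical
  set P : ℕ → ℂ → ℂ := fun n ξ => ∏ j ∈ Finset.range n, g (ξ / 2 ^ (j + 1)) with hP
  have hPdiff : ∀ n : ℕ, Differentiable ℂ (P n) := by
    intro n
    apply Differentiable.fun_finsetProd
    intro j _
    exact hdiff.comp (by fun_prop)
  -- Lipschitz-type bound near 0 on each ball
  have key : ∀ R : ℝ, ∃ C : ℝ, 0 ≤ C ∧ ∀ ξ : ℂ, ‖ξ‖ ≤ R → ‖g ξ - 1‖ ≤ C * ‖ξ‖ := by
    intro R
    rcases le_or_gt R 0 with hR | hR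
    · refine ⟨0, le_refl 0, fun ξ hξ => ?_⟩
      have : ξ = 0 := norm_le_zero_iff.mp (hξ.trans hR)
      simp [this, hg0]
    · have hcont : Continuous (deriv g) :=
        (hdiff.contDiff (n := 1)).continuous_deriv le_rfl
      obtain ⟨x0, _, hx0⟩ := (isCompact_closedBall (0:ℂ) R).exists_isMaxOn
        ⟨0, mem_closedBall_self hR.le⟩ hcont.norm.continuousOn
      refine ⟨‖deriv g x0‖, norm_nonneg _, fun ξ hξ => ?_⟩
      have h1 : ‖g ξ - g 0‖ ≤ ‖deriv g x0‖ * ‖ξ - 0‖ :=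
        Convex.norm_image_sub_le_of_norm_deriv_le
          (fun x _ => hdiff.differentiableAt)
          (fun x hx => hx0 hx) (convex_closedBall _ _)
          (mem_closedBall_self hR.le)
          (by simpa [mem_closedBall, dist_eq_norm] using hξ)
      simpa [hg0] using h1
  -- uniform Cauchy on each closed ball
  have hUC : ∀ R : ℝ, 0 ≤ R → UniformCauchySeqOn P atTop (closedBall (0:ℂ) R) := by
    intro R hR
    obtain ⟨C, hC0, hC⟩ := key R
    set u : ℕ → ℝ := fun j => C * R / 2 ^ (j + 1) with hu
    have hu0 : ∀ j, 0 ≤ u j := fun j => by positivity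
    have husum : Summable u := by
      have h1 : Summable (fun j : ℕ => (1/2 : ℝ) ^ (j+1)) :=
        (summable_nat_add_iff 1).mpr
          (summable_geometric_of_lt_one (by norm_num) (by norm_num))
      refine (h1.mul_left (C * R)).congr fun j => ?_
      show C * R * (1/2 : ℝ) ^ (j+1) = C * R / 2 ^ (j+1)
      rw [div_pow, one_pow, mul_one_div]
    -- factor norm bound
    have hfac : ∀ ξ ∈ closedBall (0:ℂ) R, ∀ j : ℕ, ‖g (ξ / 2 ^ (j+1)) - 1‖ ≤ u j := by
      intro ξ hξ j
      have hξR : ‖ξ‖ ≤ R := by simpa [mem_closedBall, dist_eq_norm] using hξ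
      have hnorm : ‖ξ / 2 ^ (j+1)‖ = ‖ξ‖ / 2 ^ (j+1) := by
        rw [norm_div, norm_pow]
        norm_num
      have h1 : ‖ξ / 2 ^ (j+1)‖ ≤ R := by
        rw [hnorm]
        calc ‖ξ‖ / 2 ^ (j+1) ≤ ‖ξ‖ / 1 := by
              apply div_le_div_of_nonneg_left (norm_nonneg _) one_pos
              exact one_le_pow₀ (by norm_num)
            _ = ‖ξ‖ := div_one _
            _ ≤ R := hξR
      calc ‖g (ξ / 2 ^ (j+1)) - 1‖ ≤ C * ‖ξ / 2 ^ (j+1)‖ := hC _ h1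
        _ = C * ‖ξ‖ / 2 ^ (j+1) := by rw [hnorm]; ring
        _ ≤ u j := by
            show C * ‖ξ‖ / 2 ^ (j+1) ≤ C * R / 2 ^ (j+1)
            gcongr
    -- bound on partial products
    set M : ℝ := Real.exp (∑' j, u j) with hM
    have hM1 : (1:ℝ) ≤ M := Real.one_le_exp (tsum_nonneg hu0)
    have hPbound : ∀ ξ ∈ closedBall (0:ℂ) R, ∀ n, ‖P n ξ‖ ≤ M := by
      intro ξ hξ n
      calc ‖P n ξ‖ = ∏ j ∈ range n, ‖g (ξ / 2 ^ (j+1))‖ := by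
            rw [hP]; exact norm_prod _ _
        _ ≤ ∏ j ∈ range n, Real.exp (u j) := by
            apply Finset.prod_le_prod (fun j _ => norm_nonneg _)
            intro j _
            have h1 : ‖g (ξ / 2 ^ (j+1))‖ ≤ 1 + ‖g (ξ / 2 ^ (j+1)) - 1‖ := by
              calc ‖g (ξ / 2 ^ (j+1))‖ = ‖(1:ℂ) + (g (ξ / 2 ^ (j+1)) - 1)‖ := by
                    congr 1; ring
                _ ≤ ‖(1:ℂ)‖ + ‖g (ξ / 2 ^ (j+1)) - 1‖ := norm_add_le _ _
                _ = 1 + ‖g (ξ / 2 ^ (j+1)) - 1‖ := by norm_num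
            have h2 := hfac ξ hξ j
            have h3 := Real.add_one_le_exp (u j)
            linarith
        _ = Real.exp (∑ j ∈ range n, u j) := (Real.exp_sum _ _).symm
        _ ≤ M := Real.exp_le_exp.mpr (Summable.sum_le_tsum _ (fun j _ => hu0 j) husum)
    -- successive differences
    have hdiffP : ∀ ξ ∈ closedBall (0:ℂ) R, ∀ j : ℕ,
        dist (P j ξ) (P (j+1) ξ) ≤ M * u j := by
      intro ξ hξ j
      have hsucc : P (j+1) ξ = P j ξ * g (ξ / 2 ^ (j+1)) := by
        rw [hP]; exact Finset.prod_range_succ _ _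
      rw [dist_eq_norm, hsucc,
        show P j ξ - P j ξ * g (ξ / 2 ^ (j+1))
            = -(P j ξ * (g (ξ / 2 ^ (j+1)) - 1)) by ring,
        norm_neg, norm_mul]
      exact mul_le_mul (hPbound ξ hξ j) (hfac ξ hξ j) (norm_nonneg _)
        (le_trans zero_le_one hM1)
    -- Cauchy estimate for m ≤ n
    have hCauchyEst : ∀ ξ ∈ closedBall (0:ℂ) R, ∀ m n : ℕ, m ≤ n →
        dist (P m ξ) (P n ξ) ≤ M * ∑' k, u (k + m) := by
      intro ξ hξ m n hmn
      have hsub : Summable fun k => u (k + m) := (summable_nat_add_iff m).mpr husum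
      calc dist (P m ξ) (P n ξ)
          ≤ ∑ j ∈ Finset.Ico m n, dist (P j ξ) (P (j+1) ξ) :=
            dist_le_Ico_sum_dist (fun j => P j ξ) hmn
        _ ≤ ∑ j ∈ Finset.Ico m n, M * u j :=
            Finset.sum_le_sum fun j _ => hdiffP ξ hξ j
        _ = M * ∑ j ∈ Finset.Ico m n, u j := by rw [Finset.mul_sum]
        _ ≤ M * ∑' k, u (k + m) := by
            apply mul_le_mul_of_nonneg_left _ (le_trans zero_le_one hM1)
            have heq : ∑ j ∈ Finset.Ico m n, u j
                = ∑ j ∈ Finset.range (n - m), u (j + m) := by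
              rw [Finset.sum_Ico_eq_sum_range]
              apply Finset.sum_congr (by congr 1) (fun j _ => by congr 1; omega)
            rw [heq]
            exact Summable.sum_le_tsum _ (fun j _ => hu0 _) hsub
    -- conclude uniform Cauchy
    rw [Metric.uniformCauchySeqOn_iff]
    intro ε hε
    have htail' : Tendsto (fun m => M * ∑' k, u (k + m)) atTop (nhds 0) := by
      simpa using (tendsto_sum_nat_add u).const_mul M
    obtain ⟨N, hN⟩ := (Metric.tendsto_atTop.mp htail') ε hε
    refine ⟨N, fun m hm n hn ξ hξ => ?_⟩
    have hmono : ∀ p q : ℕ, N ≤ p → p ≤ q → dist (P p ξ) (P q ξ) < ε := by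
      intro p q hNp hpq
      calc dist (P p ξ) (P q ξ) ≤ M * ∑' k, u (k + p) := hCauchyEst ξ hξ p q hpq
        _ < ε := by
            have h1 := hN p hNp
            have h2 : (0:ℝ) ≤ M * ∑' k, u (k + p) :=
              mul_nonneg (le_trans zero_le_one hM1) (tsum_nonneg fun k => hu0 _)
            rwa [Real.dist_eq, sub_zero, _root_.abs_of_nonneg h2] at h1
    rcases le_total m n with h | h
    · exact hmono m n hm h
    · rw [dist_comm]; exact hmono n m hn h
  -- pointwise Cauchy and definition of φ
  have hptCauchy : ∀ ξ : ℂ, CauchySeq (fun n => P n ξ) := by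
    intro ξ
    have hξ : ξ ∈ closedBall (0:ℂ) ‖ξ‖ := by simp [mem_closedBall, dist_eq_norm]
    have h1 := hUC ‖ξ‖ (norm_nonneg ξ)
    rw [Metric.uniformCauchySeqOn_iff] at h1
    rw [Metric.cauchySeq_iff]
    intro ε hε
    obtain ⟨N, hN⟩ := h1 ε hε
    exact ⟨N, fun m hm n hn => hN m hm n hn ξ hξ⟩
  choose φ hφ using fun ξ => cauchySeq_tendsto_of_complete (hptCauchy ξ)
  have hpt : ∀ ξ, Tendsto (fun n => P n ξ) atTop (nhds (φ ξ)) := hφ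
  -- locally uniform convergence
  have hTLU : TendstoLocallyUniformly P φ atTop := by
    rw [tendstoLocallyUniformly_iff_forall_isCompact]
    intro K hK
    obtain ⟨R, hR⟩ := hK.isBounded.subset_closedBall (0:ℂ)
    have hR' : K ⊆ closedBall (0:ℂ) (max R 0) :=
      hR.trans (closedBall_subset_closedBall (le_max_left _ _))
    have h1 := (hUC (max R 0) (le_max_right _ _)).tendstoUniformlyOn_of_tendsto
      (fun ξ _ => hpt ξ)
    exact h1.mono hR'
  -- analyticity
  have hanalytic : ∀ z : ℂ, AnalyticAt ℂ φ z := by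
    have hdiffφ : DifferentiableOn ℂ φ Set.univ := by
      apply (hTLU.tendstoLocallyUniformlyOn).differentiableOn
      · exact Filter.Eventually.of_forall fun n => (hPdiff n).differentiableOn
      · exact isOpen_univ
    intro z
    exact hdiffφ.analyticOnNhd isOpen_univ z (Set.mem_univ z)
  -- value at zero
  have hφ0 : φ 0 = 1 := by
    have h1 : Tendsto (fun n : ℕ => (1:ℂ)) atTop (nhds (φ 0)) := by
      have := hpt 0
      refine this.congr fun n => ?_
      rw [hP]
      simp [hg0]
    exact tendsto_nhds_unique h1 tendsto_const_nhds
  -- functional equation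
  have hfe : ∀ ξ : ℂ, φ (2 * ξ) = g ξ * φ ξ := by
    intro ξ
    have h2 : ∀ n : ℕ, P (n+1) (2*ξ) = g ξ * P n ξ := by
      intro n
      rw [hP]
      simp only []
      rw [Finset.prod_range_succ']
      have e0 : (2*ξ) / 2 ^ (0+1) = ξ := by norm_num
      have eS : ∀ j : ℕ, (2*ξ) / 2 ^ (j+1+1) = ξ / 2 ^ (j+1) := by
        intro j
        rw [pow_succ]
        rw [mul_comm ((2:ℂ) ^ (j+1)) 2, ← div_div]
        congr 1
        rw [mul_comm, mul_div_assoc, div_self (two_ne_zero), mul_one]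
      rw [e0, mul_comm]
      congr 1
      exact Finset.prod_congr rfl fun j _ => by rw [eS j]
    have h1 : Tendsto (fun n => P (n+1) (2*ξ)) atTop (nhds (φ (2*ξ))) :=
      (hpt (2*ξ)).comp (tendsto_add_atTop_nat 1)
    have h3 : Tendsto (fun n => g ξ * P n ξ) atTop (nhds (g ξ * φ ξ)) :=
      (hpt ξ).const_mul _
    exact tendsto_nhds_unique (h1.congr fun n => h2 n) h3
  exact ⟨φ, hanalytic, hφ0, hfe, hTLU⟩

theorem stmt11 (c : ℤ → ℂ) (hc : (Function.support c).Finite) (hc0 : symb c 0 = 1) :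
    ∃ φ : ℂ → ℂ,
      (∀ z : ℂ, AnalyticAt ℂ φ z) ∧ φ 0 = 1 ∧
      (∀ ξ : ℂ, φ (2 * ξ) = symb c ξ * φ ξ) ∧
      TendstoLocallyUniformly
        (fun n : ℕ => fun ξ : ℂ => ∏ j ∈ Finset.range n, symb c (ξ / 2 ^ (j + 1)))
        φ Filter.atTop := by
  have hsum : ∀ ξ : ℂ, symb c ξ = ∑ k ∈ hc.toFinset, c k * Complex.exp (-Complex.I * k * ξ) := by
    intro ξ
    apply finsum_eq_sum_of_support_subset
    intro k hk
    simp only [Function.mem_support] at hk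
    have : c k ≠ 0 := fun h => hk (by simp [h])
    simpa using this
  have hdiff : Differentiable ℂ (symb c) := by
    have h2 : Differentiable ℂ
        (fun ξ : ℂ => ∑ k ∈ hc.toFinset, c k * Complex.exp (-Complex.I * k * ξ)) := by
      apply Differentiable.fun_sum
      intro k _
      apply Differentiable.const_mul
      apply Complex.differentiable_exp.comp
      fun_prop
    have hfun : symb c = fun ξ : ℂ => ∑ k ∈ hc.toFinset, c k * Complex.exp (-Complex.I * k * ξ) :=
      funext hsum
    rw [hfun]
    exact h2
  exact aux_prod (symb c) hdiff hc0
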